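/- arXiv:2003.13039 — 2 statements merged into one kernel-verified Lean document; each statement's English description precedes it below -/
import Mathlib

section
/- For any two nondecreasing maps τ:[p]→[m] and π:[q]→[m] between finite ordinals and any shuffling of (τ,π) of length n (i.e. decompositions Im(τ)=A₁∪...∪Aₛ and Im(π)=B₁∪...∪Bₜ with A₁<...<Aₛ, B₁<...<Bₜ, s+t=n+1, interleaved as A₁≤B₁≤A₂≤... or B₁≤A₁≤B₂≤...), the cardinality of Im(τ)∩Im(π) is at most s+t−1 = n. Consequently |Im(τ)∩Im(π)| ≤ lk(τ,π), where lk(τ,π) is the minimal length of a shuffling of (τ,π). -/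
open Set

/-- `A ≤ B` as blocks: every element of `A` is at most every element of `B`. -/
def BlockLE {m : ℕ} (A B : Set (Fin m)) : Prop := ∀ a ∈ A, ∀ b ∈ B, a ≤ b

/-- `A < B` as blocks: every element of `A` is strictly below every element of `B`. -/
def BlockLT {m : ℕ} (A B : Set (Fin m)) : Prop := ∀ a ∈ A, ∀ b ∈ B, a < b

/-- A shuffling of length `n` of a pair of nondecreasing maps `τ : [p] → [m]`, `π : [q] → [m]`:
ordered decompositions `Im(τ) = A₁ ∪ ⋯ ∪ Aₛ` (`A₁ < ⋯ < Aₛ`) and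
`Im(π) = B₁ ∪ ⋯ ∪ Bₜ` (`B₁ < ⋯ < Bₜ`) into nonempty blocks with `s + t = n + 1`,
interleaved as `A₁ ≤ B₁ ≤ A₂ ≤ B₂ ≤ ⋯` or `B₁ ≤ A₁ ≤ B₂ ≤ A₂ ≤ ⋯`. -/
structure Shuffling {p q m : ℕ} (τ : Fin (p + 1) →o Fin (m + 1))
    (π : Fin (q + 1) →o Fin (m + 1)) (n : ℕ) where
  s : ℕ
  t : ℕ
  hs : 0 < s
  ht : 0 < t
  hst : s + t = n + 1
  A : Fin s → Set (Fin (m + 1))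
  B : Fin t → Set (Fin (m + 1))
  hAne : ∀ i, (A i).Nonempty
  hBne : ∀ j, (B j).Nonempty
  hAdisj : ∀ i j, i ≠ j → Disjoint (A i) (A j)
  hBdisj : ∀ i j, i ≠ j → Disjoint (B i) (B j)
  hAord : ∀ i j : Fin s, i < j → BlockLT (A i) (A j)
  hBord : ∀ i j : Fin t, i < j → BlockLT (B i) (B j)
  hAcover : (⋃ i, A i) = Set.range ⇑τ
  hBcover : (⋃ j, B j) = Set.range ⇑π
  interleave :
    (∀ (i : Fin s) (j : Fin t),
        ((i : ℕ) ≤ (j : ℕ) → BlockLE (A i) (B j)) ∧ ((j : ℕ) < (i : ℕ) → BlockLE (B j) (A i))) ∨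
    (∀ (i : Fin s) (j : Fin t),
        ((j : ℕ) ≤ (i : ℕ) → BlockLE (B j) (A i)) ∧ ((i : ℕ) < (j : ℕ) → BlockLE (A i) (B j)))

/-- The linking number: the minimal `n` for which a shuffling of length `n` exists. -/
noncomputable def linkingNumber {p q m : ℕ} (τ : Fin (p + 1) →o Fin (m + 1))
    (π : Fin (q + 1) →o Fin (m + 1)) : ℕ :=
  sInf {n | Nonempty (Shuffling τ π n)}

/-- For any shuffling of length `n` of `(τ, π)`, `|Im τ ∩ Im π| ≤ s + t - 1 = n`;
consequently `|Im τ ∩ Im π| ≤ lk(τ, π)`. -/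
theorem stmt0 {p q m : ℕ} (τ : Fin (p + 1) →o Fin (m + 1)) (π : Fin (q + 1) →o Fin (m + 1)) :
    (∀ n : ℕ, Nonempty (Shuffling τ π n) →
      (Set.range ⇑τ ∩ Set.range ⇑π).ncard ≤ n) ∧
    ((∃ n, Nonempty (Shuffling τ π n)) →
      (Set.range ⇑τ ∩ Set.range ⇑π).ncard ≤ linkingNumber τ π) := by
  have main : ∀ n : ℕ, Nonempty (Shuffling τ π n) →
      (Set.range ⇑τ ∩ Set.range ⇑π).ncard ≤ n := by
    rintro n ⟨S⟩
    classical
    set T := Set.range ⇑τ ∩ Set.range ⇑π with hT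
    have hA : ∀ x ∈ T, ∃ i, x ∈ S.A i := by
      intro x hx
      have : x ∈ ⋃ i, S.A i := S.hAcover ▸ hx.1
      simpa using this
    have hB : ∀ x ∈ T, ∃ j, x ∈ S.B j := by
      intro x hx
      have : x ∈ ⋃ j, S.B j := S.hBcover ▸ hx.2
      simpa using this
    choose I hI using hA
    choose J hJ using hB
    have hImono : ∀ x hx y hy, x < y → (I x hx : Fin S.s) ≤ I y hy := by
      intro x hx y hy hxy
      by_contra h
      push_neg at h
      exact absurd (S.hAord _ _ h y (hI y hy) x (hI x hx)) (by exact fun h' => absurd hxy (not_lt.2 h'.le))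
    have hJmono : ∀ x hx y hy, x < y → (J x hx : Fin S.t) ≤ J y hy := by
      intro x hx y hy hxy
      by_contra h
      push_neg at h
      exact absurd (S.hBord _ _ h y (hJ y hy) x (hJ x hx)) (by exact fun h' => absurd hxy (not_lt.2 h'.le))
    have hne : ∀ x hx y hy, x < y → ¬(I x hx = I y hy ∧ J x hx = J y hy) := by
      rintro x hx y hy hxy ⟨hIe, hJe⟩
      have hyA : y ∈ S.A (I x hx) := hIe ▸ hI y hy
      have hyB : y ∈ S.B (J x hx) := hJe ▸ hJ y hy
      have hyx : y ≤ x := by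
        rcases S.interleave with h | h
        · rcases le_or_gt ((I x hx : ℕ)) ((J x hx : ℕ)) with hle | hlt
          · exact (h (I x hx) (J x hx)).1 hle y hyA x (hJ x hx)
          · exact (h (I x hx) (J x hx)).2 hlt y hyB x (hI x hx)
        · rcases le_or_gt ((J x hx : ℕ)) ((I x hx : ℕ)) with hle | hlt
          · exact (h (I x hx) (J x hx)).1 hle y hyB x (hI x hx)
          · exact (h (I x hx) (J x hx)).2 hlt y hyA x (hJ x hx)
      exact absurd hxy (not_lt.2 hyx)
    have hsum : ∀ x hx y hy, x < y → (I x hx : ℕ) + (J x hx : ℕ) < (I y hy : ℕ) + (J y hy : ℕ) := by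
      intro x hx y hy hxy
      have h1 := hImono x hx y hy hxy
      have h2 := hJmono x hx y hy hxy
      have h3 := hne x hx y hy hxy
      rcases lt_or_eq_of_le h1 with h1' | h1'
      · exact Nat.add_lt_add_of_lt_of_le h1' h2
      · rcases lt_or_eq_of_le h2 with h2' | h2'
        · exact Nat.add_lt_add_of_le_of_lt (le_of_eq (congrArg _ h1')) h2'
        · exact absurd ⟨h1', h2'⟩ h3
    have hn : 0 < n := by have := S.hs; have := S.ht; have := S.hst; omega
    have hbd : ∀ x hx, (I x hx : ℕ) + (J x hx : ℕ) < n := by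
      intro x hx
      have h1 := (I x hx).isLt
      have h2 := (J x hx).isLt
      have := S.hst
      omega
    let f : T → Fin n := fun x => ⟨(I x.1 x.2 : ℕ) + (J x.1 x.2 : ℕ), hbd x.1 x.2⟩
    have hf : Function.Injective f := by
      rintro ⟨x, hx⟩ ⟨y, hy⟩ hxy
      have hsums : (I x hx : ℕ) + (J x hx : ℕ) = (I y hy : ℕ) + (J y hy : ℕ) :=
        congrArg Fin.val hxy
      rcases lt_trichotomy x y with h | h | h
      · exact absurd hsums (Nat.ne_of_lt (hsum x hx y hy h))
      · exact Subtype.ext h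
      · exact absurd hsums.symm (Nat.ne_of_lt (hsum y hy x hx h))
    calc T.ncard = Nat.card T := (Nat.card_coe_set_eq T).symm
      _ ≤ Nat.card (Fin n) := Nat.card_le_card_of_injective f hf
      _ = n := by simp
  refine ⟨main, ?_⟩
  rintro ⟨n, hn⟩
  have hmem : linkingNumber τ π ∈ {n | Nonempty (Shuffling τ π n)} :=
    Nat.sInf_mem ⟨n, hn⟩
  exact main _ hmem
end

section
/- Let E be a symmetric cosimplicial monoid in vector spaces over a field of characteristic zero, with Pⁿ(E) ⊆ E(n) the subspace of anti-symmetric poly-primitive elements (σ(a)=sgn(σ)a for all σ∈Sₙ, and ∂ᵢ(a)=â_{i−1}+âᵢ for i=1,...,n). Then Pⁿ(E) ∩ Bⁿ(E) = 0, where Bⁿ(E) is the space of coboundaries of the total cosimplicial differential. -/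
private lemma sum_sign_fix {k : Type*} [Field k] [CharZero k]
    {W : Type*} [AddCommGroup W] [Module k W] {n : ℕ}
    (ρ : Equiv.Perm (Fin n) →* Module.End k W) (x : W)
    (t : Equiv.Perm (Fin n)) (ht : Equiv.Perm.sign t = -1) (hfix : ρ t x = x) :
    ∑ σ : Equiv.Perm (Fin n), ((Equiv.Perm.sign σ : ℤ) : k) • ρ σ x = 0 := by
  set S := ∑ σ : Equiv.Perm (Fin n), ((Equiv.Perm.sign σ : ℤ) : k) • ρ σ x with hSdef
  have h : S = -S := by
    rw [hSdef, ← Finset.sum_neg_distrib]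
    refine Fintype.sum_equiv (Equiv.mulRight t) _ _ (fun σ => ?_)
    simp only [Equiv.coe_mulRight, map_mul, ht, Units.val_mul, Units.val_neg,
      Units.val_one]
    have : (ρ σ * ρ t) x = ρ σ x := by
      simp [Module.End.mul_apply, hfix]
    rw [this]
    push_cast
    rw [mul_neg_one, neg_smul, neg_neg]
  have h2 : (2 : k) • S = 0 := by
    rw [two_smul]; nth_rewrite 2 [h]; simp
  rcases smul_eq_zero.mp h2 with h3 | h3
  · exact absurd h3 two_ne_zero
  · exact h3

private lemma sum_sign_mul {k : Type*} [Field k]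
    {W : Type*} [AddCommGroup W] [Module k W] {n : ℕ}
    (ρ : Equiv.Perm (Fin n) →* Module.End k W) (x : W) (w : Equiv.Perm (Fin n)) :
    ∑ σ : Equiv.Perm (Fin n), ((Equiv.Perm.sign σ : ℤ) : k) • ρ σ (ρ w x) =
      ((Equiv.Perm.sign w : ℤ) : k) •
        ∑ σ : Equiv.Perm (Fin n), ((Equiv.Perm.sign σ : ℤ) : k) • ρ σ x := by
  rw [Finset.smul_sum]
  refine Fintype.sum_equiv (Equiv.mulRight w) _ _ (fun σ => ?_)
  simp only [Equiv.coe_mulRight, map_mul, Units.val_mul, smul_smul]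
  have h1 : (ρ σ * ρ w) x = ρ σ (ρ w x) := by simp [Module.End.mul_apply]
  rw [h1]
  congr 1
  have : (Equiv.Perm.sign w : ℤ) * (Equiv.Perm.sign w : ℤ) = 1 := by
    rcases Int.units_eq_one_or (Equiv.Perm.sign w) with h | h <;> simp [h]
  push_cast
  have h2 : ((Equiv.Perm.sign w : ℤ) : k) * ((Equiv.Perm.sign w : ℤ) : k) = 1 := by
    rw [← Int.cast_mul, this, Int.cast_one]
  ring_nf
  rw [sq, h2, one_mul]

private lemma sign_word {m : ℕ} :
    Equiv.Perm.sign
      ((List.ofFn (fun i : Fin m => Equiv.swap i.castSucc i.succ)).reverse.prod) =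
      (-1) ^ m := by
  rw [MonoidHom.map_list_prod, List.map_reverse, List.prod_reverse, List.map_ofFn,
    List.prod_ofFn]
  have : ∀ i : Fin m, Equiv.Perm.sign (Equiv.swap i.castSucc i.succ) = -1 := fun i =>
    Equiv.Perm.sign_swap (Fin.castSucc_lt_succ (i := i)).ne
  simp [Function.comp, this]

/-- `âⱼ = tⱼ ⋯ t₁ ∂₀(a)`, where `tᵢ` is the transposition `(i, i+1)` (`â₀ = ∂₀(a)`). -/
noncomputable def ahat (k : Type*) [Field k] (n : ℕ) (V W : Type*)
    [AddCommGroup V] [Module k V] [AddCommGroup W] [Module k W]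
    (d : Fin (n + 2) → V →ₗ[k] W)
    (ρ : Equiv.Perm (Fin (n + 1)) →* Module.End k W) (a : V) (j : ℕ) : W :=
  ρ (((List.ofFn (fun s : Fin n => Equiv.swap s.castSucc s.succ)).take j).reverse.prod)
    (d 0 a)

/-- In a symmetric cosimplicial monoid in vector spaces over a field of characteristic
zero, with `U = E(m)`, `V = E(m+1) = E(n)`, `W = E(m+2)` (so `n = m+1`), an
anti-symmetric poly-primitive element `a ∈ E(n)` which is a coboundary is zero:
`Pⁿ(E) ∩ Bⁿ(E) = 0`. -/
theorem stmt13 (k : Type*) [Field k] [CharZero k] (m : ℕ)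
    (U V W : Type*) [AddCommGroup U] [Module k U] [AddCommGroup V] [Module k V]
    [AddCommGroup W] [Module k W]
    (dV : Fin (m + 2) → U →ₗ[k] V) (dW : Fin (m + 3) → V →ₗ[k] W)
    (ρV : Equiv.Perm (Fin (m + 1)) →* Module.End k V)
    (ρW : Equiv.Perm (Fin (m + 2)) →* Module.End k W)
    (h1V : ∀ i : Fin m,
      (ρV (Equiv.swap i.castSucc i.succ)) ∘ₗ dV ⟨(i : ℕ) + 1, by have := i.isLt; omega⟩ =
        dV ⟨(i : ℕ) + 1, by have := i.isLt; omega⟩)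
    (h2V : (ρV ((List.ofFn (fun i : Fin m => Equiv.swap i.castSucc i.succ)).reverse.prod))
        ∘ₗ dV 0 = dV (Fin.last (m + 1)))
    (h1W : ∀ i : Fin (m + 1),
      (ρW (Equiv.swap i.castSucc i.succ)) ∘ₗ dW ⟨(i : ℕ) + 1, by have := i.isLt; omega⟩ =
        dW ⟨(i : ℕ) + 1, by have := i.isLt; omega⟩)
    (h2W : (ρW ((List.ofFn
        (fun i : Fin (m + 1) => Equiv.swap i.castSucc i.succ)).reverse.prod))
        ∘ₗ dW 0 = dW (Fin.last (m + 2)))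
    (a : V)
    (hanti : ∀ σ : Equiv.Perm (Fin (m + 1)),
      ρV σ a = (((Equiv.Perm.sign σ : ℤ) : k)) • a)
    (hpoly : ∀ i : Fin (m + 1),
      dW ⟨(i : ℕ) + 1, by have := i.isLt; omega⟩ a =
        ahat k (m + 1) V W dW ρW a (i : ℕ) + ahat k (m + 1) V W dW ρW a ((i : ℕ) + 1))
    (b : U) (hb : a = ∑ i : Fin (m + 2), ((-1 : k) ^ (i : ℕ)) • dV i b) :
    a = 0 := by
  classical
  set T : Fin (m + 2) → V := fun i =>
    ∑ σ : Equiv.Perm (Fin (m + 1)), ((Equiv.Perm.sign σ : ℤ) : k) • ρV σ (dV i b)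
    with hT
  -- antisymmetrizing a gives card • a
  have hcard :
      ∑ σ : Equiv.Perm (Fin (m + 1)), ((Equiv.Perm.sign σ : ℤ) : k) • ρV σ a =
        (Fintype.card (Equiv.Perm (Fin (m + 1))) : k) • a := by
    have h1 : ∀ σ : Equiv.Perm (Fin (m + 1)),
        ((Equiv.Perm.sign σ : ℤ) : k) • ρV σ a = a := fun σ => by
      rw [hanti, smul_smul, ← Int.cast_mul]
      rcases Int.units_eq_one_or (Equiv.Perm.sign σ) with h | h <;> simp [h]
    rw [Finset.sum_congr rfl (fun σ _ => h1 σ), Finset.sum_const, Finset.card_univ,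
      ← Nat.cast_smul_eq_nsmul k]
  -- antisymmetrizing a as sum over i
  have hsplit :
      ∑ σ : Equiv.Perm (Fin (m + 1)), ((Equiv.Perm.sign σ : ℤ) : k) • ρV σ a =
        ∑ i : Fin (m + 2), ((-1 : k) ^ (i : ℕ)) • T i := by
    conv_lhs => rw [hb]
    simp only [map_sum, map_smul, Finset.smul_sum, hT]
    rw [Finset.sum_comm]
    refine Finset.sum_congr rfl (fun i _ => Finset.sum_congr rfl (fun σ _ => ?_))
    rw [smul_comm]
  -- interior terms vanish
  have hint : ∀ j : Fin m, T (Fin.castSucc (Fin.succ j)) = 0 := by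
    intro j
    refine sum_sign_fix ρV _ (Equiv.swap j.castSucc j.succ)
      (Equiv.Perm.sign_swap (Fin.castSucc_lt_succ (i := j)).ne) ?_
    have h := LinearMap.congr_fun (h1V j) b
    have he : (⟨(j : ℕ) + 1, by have := j.isLt; omega⟩ : Fin (m + 2)) =
        Fin.castSucc (Fin.succ j) := by
      ext; simp
    rw [he] at h
    exact h
  -- last term
  have hlast : T (Fin.last (m + 1)) = ((-1 : k) ^ m) • T 0 := by
    have h := LinearMap.congr_fun h2V b
    have hw := sum_sign_mul (k := k) ρV (dV 0 b)
      ((List.ofFn (fun i : Fin m => Equiv.swap i.castSucc i.succ)).reverse.prod)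
    have hd : dV (Fin.last (m + 1)) b =
        ρV ((List.ofFn (fun i : Fin m => Equiv.swap i.castSucc i.succ)).reverse.prod)
          (dV 0 b) := by rw [← h]; rfl
    simp only [hT]
    rw [Finset.sum_congr rfl (fun σ _ => by rw [hd]), hw, sign_word]
    congr 1
    simp [Units.val_pow_eq_pow_val]
  -- assemble
  have hzero : ∑ i : Fin (m + 2), ((-1 : k) ^ (i : ℕ)) • T i = 0 := by
    rw [Fin.sum_univ_castSucc, Fin.sum_univ_succ]
    simp only [Fin.coe_castSucc, Fin.val_succ, Fin.val_zero, Fin.val_last, pow_zero,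
      one_smul]
    rw [Finset.sum_congr rfl (fun j _ => by rw [hint j, smul_zero]),
      Finset.sum_const, smul_zero, add_zero, hlast, smul_smul]
    have : (-1 : k) ^ (m + 1) * (-1) ^ m = -1 := by
      rw [← pow_add]
      have : m + 1 + m = 2 * m + 1 := by omega
      rw [this, pow_succ, pow_mul]
      simp
    rw [this, neg_one_smul, Fin.castSucc_zero, add_neg_cancel]
  rw [hsplit, hzero] at hcard
  have hne : (Fintype.card (Equiv.Perm (Fin (m + 1))) : k) ≠ 0 := by
    exact_mod_cast Nat.cast_ne_zero.mpr Fintype.card_ne_zero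
  rcases smul_eq_zero.mp hcard.symm with h | h
  · exact absurd h hne
  · exact h
end
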